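/- (Theorem 2, input-shunt-capacitor design: plug-and-play stability.) Fix reals D ∈ (0,1], L > 0, C > 0, P > 0, V̄₁ > 0, V̄₂ > 0, V̄_{c1} > 0, V̄_{c2} > 0. For R > 0 and C_s > 0 define the real 6×6 matrix A(R, C_s), in the state order (v_{c1}, i₁, v₁, v_{c2}, i₂, v₂), with rows: row 1 = (−2/(C_s·R), −1/C_s, 0, 1/(C_s·R), 0, 0); row 2 = (D/L, 0, −1/L, 0, 0, 0); row 3 = (0, 1/C, P/(C·V̄₁²), 0, 0, 0); row 4 = (1/(C_s·R), 0, 0, −1/(C_s·R), −1/C_s, 0); row 5 = (0, 0, 0, D/L, 0, −1/L); row 6 = (0, 0, 0, 0, 1/C, P/(C·V̄₂²)); and the 6×2 input matrix B with B(2,1) = V̄_{c1}/L, B(5,2) = V̄_{c2}/L and all other entries zero. Then there exist feedback gains F₁, F₂ ∈ ℝ³ and a capacitance C_s > 0 such that, with the block-diagonal feedback u = (F₁·(v_{c1}, i₁, v₁), F₂·(v_{c2}, i₂, v₂)), the closed-loop matrix A(R, C_s) + B·F is Hurwitz for all line resistances R > 0. -/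

import Mathlib

/-- A real square matrix is Hurwitz if every complex eigenvalue has strictly
negative real part. -/
def Matrix.IsHurwitz {n : Type*} [Fintype n] [DecidableEq n]
    (M : Matrix n n ℝ) : Prop :=
  ∀ μ ∈ spectrum ℂ (M.map Complex.ofReal), μ.re < 0

/-- Open-loop state matrix of two cascaded buck converters with CPLs, each
augmented with a shunt capacitor `C_s` at its input, with line resistance `R`;
state order `(v_{c1}, i₁, v₁, v_{c2}, i₂, v₂)`. -/
noncomputable def inputCapNetwork (D L C P Vbar₁ Vbar₂ R Cs : ℝ) :
    Matrix (Fin 6) (Fin 6) ℝ :=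
  !![-(2 / (Cs * R)), -(1 / Cs), 0, 1 / (Cs * R), 0, 0;
     D / L, 0, -(1 / L), 0, 0, 0;
     0, 1 / C, P / (C * Vbar₁ ^ 2), 0, 0, 0;
     1 / (Cs * R), 0, 0, -(1 / (Cs * R)), -(1 / Cs), 0;
     0, 0, 0, D / L, 0, -(1 / L);
     0, 0, 0, 0, 1 / C, P / (C * Vbar₂ ^ 2)]

/-- Input matrix: the duty-cycle deviations enter the inductor-current rows. -/
noncomputable def inputCapB (L Vbarc₁ Vbarc₂ : ℝ) : Matrix (Fin 6) (Fin 2) ℝ :=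
  !![0, 0;
     Vbarc₁ / L, 0;
     0, 0;
     0, 0;
     0, Vbarc₂ / L;
     0, 0]

/-- Block-diagonal feedback: each converter's duty cycle is a linear feedback
of its own three states only. -/
noncomputable def blockFeedback (F₁ F₂ : Fin 3 → ℝ) : Matrix (Fin 2) (Fin 6) ℝ :=
  !![F₁ 0, F₁ 1, F₁ 2, 0, 0, 0;
     0, 0, 0, F₂ 0, F₂ 1, F₂ 2]

section VecLits
variable {α : Type*}
@[simp] lemma cv_1_1 (x : α) (u : Fin 1 → α) : Matrix.vecCons x u (1 : Fin 2) = u (0 : Fin 1) := rfl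
@[simp] lemma cv_2_1 (x : α) (u : Fin 2 → α) : Matrix.vecCons x u (1 : Fin 3) = u (0 : Fin 2) := rfl
@[simp] lemma cv_2_2 (x : α) (u : Fin 2 → α) : Matrix.vecCons x u (2 : Fin 3) = u (1 : Fin 2) := rfl
@[simp] lemma cv_3_1 (x : α) (u : Fin 3 → α) : Matrix.vecCons x u (1 : Fin 4) = u (0 : Fin 3) := rfl
@[simp] lemma cv_3_2 (x : α) (u : Fin 3 → α) : Matrix.vecCons x u (2 : Fin 4) = u (1 : Fin 3) := rfl
@[simp] lemma cv_3_3 (x : α) (u : Fin 3 → α) : Matrix.vecCons x u (3 : Fin 4) = u (2 : Fin 3) := rfl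
@[simp] lemma cv_4_1 (x : α) (u : Fin 4 → α) : Matrix.vecCons x u (1 : Fin 5) = u (0 : Fin 4) := rfl
@[simp] lemma cv_4_2 (x : α) (u : Fin 4 → α) : Matrix.vecCons x u (2 : Fin 5) = u (1 : Fin 4) := rfl
@[simp] lemma cv_4_3 (x : α) (u : Fin 4 → α) : Matrix.vecCons x u (3 : Fin 5) = u (2 : Fin 4) := rfl
@[simp] lemma cv_4_4 (x : α) (u : Fin 4 → α) : Matrix.vecCons x u (4 : Fin 5) = u (3 : Fin 4) := rfl
@[simp] lemma cv_5_1 (x : α) (u : Fin 5 → α) : Matrix.vecCons x u (1 : Fin 6) = u (0 : Fin 5) := rfl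
@[simp] lemma cv_5_2 (x : α) (u : Fin 5 → α) : Matrix.vecCons x u (2 : Fin 6) = u (1 : Fin 5) := rfl
@[simp] lemma cv_5_3 (x : α) (u : Fin 5 → α) : Matrix.vecCons x u (3 : Fin 6) = u (2 : Fin 5) := rfl
@[simp] lemma cv_5_4 (x : α) (u : Fin 5 → α) : Matrix.vecCons x u (4 : Fin 6) = u (3 : Fin 5) := rfl
@[simp] lemma cv_5_5 (x : α) (u : Fin 5 → α) : Matrix.vecCons x u (5 : Fin 6) = u (4 : Fin 5) := rfl
end VecLits

set_option maxRecDepth 10000 in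
set_option maxHeartbeats 2000000 in
lemma det6 (r a₁ b₁ c p₁ a₂ b₂ p₂ x : ℂ) :
  Matrix.det !![x+2*r, 1, 0, -r, 0, 0;
                0, x-a₁, -b₁, 0, 0, 0;
                0, -c, x-p₁, 0, 0, 0;
                -r, 0, 0, x+r, 1, 0;
                0, 0, 0, 0, x-a₂, -b₂;
                0, 0, 0, 0, -c, x-p₂] =
  (x^2+3*r*x+r^2) * ((x-a₁)*(x-p₁)-b₁*c) * ((x-a₂)*(x-p₂)-b₂*c) := by
  simp (config := { decide := true }) [Matrix.det_succ_row_zero, Fin.sum_univ_succ,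
    Fin.succAbove, Fin.castSucc, Fin.castAdd, Fin.castLE]
  ring

lemma quad_root_re_neg {b c : ℝ} (hb : 0 < b) (hc : 0 < c) {μ : ℂ}
    (h : μ^2 + (b:ℂ)*μ + (c:ℂ) = 0) : μ.re < 0 := by
  have hre := congrArg Complex.re h
  have him := congrArg Complex.im h
  simp [pow_two, Complex.add_re, Complex.add_im, Complex.mul_re, Complex.mul_im] at hre him
  have him2 : μ.im * (2*μ.re + b) = 0 := by linear_combination him
  by_contra hx
  push_neg at hx
  rcases mul_eq_zero.mp him2 with h0 | h0
  · rw [h0] at hre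
    nlinarith [hre]
  · linarith

set_option maxHeartbeats 4000000 in
set_option maxRecDepth 100000 in

/-- Theorem 2 (input-shunt-capacitor design, plug-and-play stability): there
exist individual feedback gains `F₁, F₂ ∈ ℝ³` and a shunt capacitance
`C_s > 0` such that the closed-loop network matrix is Hurwitz for every line
resistance `R > 0`. -/
theorem input_shunt_capacitor_plug_and_play
    (D L C P Vbar₁ Vbar₂ Vbarc₁ Vbarc₂ : ℝ) (hD : 0 < D ∧ D ≤ 1)
    (hL : 0 < L) (hC : 0 < C) (hP : 0 < P) (hV₁ : 0 < Vbar₁)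
    (hV₂ : 0 < Vbar₂) (hVc₁ : 0 < Vbarc₁) (hVc₂ : 0 < Vbarc₂) :
    ∃ F₁ F₂ : Fin 3 → ℝ, ∃ Cs > (0 : ℝ), ∀ R > (0 : ℝ),
      Matrix.IsHurwitz (inputCapNetwork D L C P Vbar₁ Vbar₂ R Cs +
        inputCapB L Vbarc₁ Vbarc₂ * blockFeedback F₁ F₂) := by
  have hC0 : C ≠ 0 := ne_of_gt hC
  have hL0 : L ≠ 0 := ne_of_gt hL
  have hc₁ : Vbarc₁ ≠ 0 := ne_of_gt hVc₁
  have hc₂ : Vbarc₂ ≠ 0 := ne_of_gt hVc₂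
  set p₁ : ℝ := P / (C * Vbar₁ ^ 2) with hp₁def
  set p₂ : ℝ := P / (C * Vbar₂ ^ 2) with hp₂def
  set a₁ : ℝ := -(1 + p₁) with ha₁def
  set a₂ : ℝ := -(1 + p₂) with ha₂def
  set b₁ : ℝ := C * (a₁ * p₁ - 1) with hb₁def
  set b₂ : ℝ := C * (a₂ * p₂ - 1) with hb₂def
  have r1 : a₁ + p₁ = -1 := by rw [ha₁def]; ring
  have r2 : b₁ * (1/C) = a₁ * p₁ - 1 := by rw [hb₁def]; field_simp
  have s1 : a₂ + p₂ = -1 := by rw [ha₂def]; ring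
  have s2 : b₂ * (1/C) = a₂ * p₂ - 1 := by rw [hb₂def]; field_simp
  refine ⟨![-D/Vbarc₁, L*a₁/Vbarc₁, (L*b₁+1)/Vbarc₁],
          ![-D/Vbarc₂, L*a₂/Vbarc₂, (L*b₂+1)/Vbarc₂], 1, one_pos, ?_⟩
  intro R hR
  have hR0 : R ≠ 0 := ne_of_gt hR
  have hM : inputCapNetwork D L C P Vbar₁ Vbar₂ R 1 +
      inputCapB L Vbarc₁ Vbarc₂ *
        blockFeedback ![-D/Vbarc₁, L*a₁/Vbarc₁, (L*b₁+1)/Vbarc₁]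
          ![-D/Vbarc₂, L*a₂/Vbarc₂, (L*b₂+1)/Vbarc₂] =
      !![-(2/R), -1, 0, 1/R, 0, 0;
         0, a₁, b₁, 0, 0, 0;
         0, 1/C, p₁, 0, 0, 0;
         1/R, 0, 0, -(1/R), -1, 0;
         0, 0, 0, 0, a₂, b₂;
         0, 0, 0, 0, 1/C, p₂] := by
    ext i j
    fin_cases i <;> fin_cases j <;>
      simp [inputCapNetwork, inputCapB, blockFeedback, Matrix.mul_apply,
        Fin.sum_univ_succ, Matrix.vecHead, Matrix.vecTail] <;>
      (try field_simp) <;> (try ring) <;>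
      (try (simp only [hp₁def, hp₂def]; field_simp [hV₁.ne', hV₂.ne']))
  rw [hM]
  intro μ hμ
  rw [spectrum.mem_iff] at hμ
  have hdet : (algebraMap ℂ (Matrix (Fin 6) (Fin 6) ℂ) μ -
      (!![-(2/R), -1, 0, 1/R, 0, 0;
         0, a₁, b₁, 0, 0, 0;
         0, 1/C, p₁, 0, 0, 0;
         1/R, 0, 0, -(1/R), -1, 0;
         0, 0, 0, 0, a₂, b₂;
         0, 0, 0, 0, 1/C, p₂]).map Complex.ofReal).det = 0 := by
    by_contra hd
    exact hμ ((Matrix.isUnit_iff_isUnit_det _).mpr (isUnit_iff_ne_zero.mpr hd))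
  have hmat : algebraMap ℂ (Matrix (Fin 6) (Fin 6) ℂ) μ -
      (!![-(2/R), -1, 0, 1/R, 0, 0;
         0, a₁, b₁, 0, 0, 0;
         0, 1/C, p₁, 0, 0, 0;
         1/R, 0, 0, -(1/R), -1, 0;
         0, 0, 0, 0, a₂, b₂;
         0, 0, 0, 0, 1/C, p₂]).map Complex.ofReal =
      !![μ+2*((1/R:ℝ):ℂ), 1, 0, -((1/R:ℝ):ℂ), 0, 0;
         0, μ-(a₁:ℂ), -(b₁:ℂ), 0, 0, 0;
         0, -((1/C:ℝ):ℂ), μ-(p₁:ℂ), 0, 0, 0;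
         -((1/R:ℝ):ℂ), 0, 0, μ+((1/R:ℝ):ℂ), 1, 0;
         0, 0, 0, 0, μ-(a₂:ℂ), -(b₂:ℂ);
         0, 0, 0, 0, -((1/C:ℝ):ℂ), μ-(p₂:ℂ)] := by
    ext i j
    fin_cases i <;> fin_cases j <;>
      simp [Matrix.algebraMap_matrix_apply, Matrix.map_apply, Matrix.vecHead,
        Matrix.vecTail] <;>
      (try push_cast) <;> (try ring)
  rw [hmat, det6] at hdet
  have key₁ : (μ-(a₁:ℂ))*(μ-(p₁:ℂ))-(b₁:ℂ)*((1/C:ℝ):ℂ) = μ^2+μ+1 := by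
    have c1 : (a₁:ℂ) + (p₁:ℂ) = -1 := by exact_mod_cast congrArg Complex.ofReal r1
    have c2 : (b₁:ℂ) * ((1/C:ℝ):ℂ) = (a₁:ℂ)*(p₁:ℂ) - 1 := by
      exact_mod_cast congrArg Complex.ofReal r2
    linear_combination (-μ) * c1 - c2
  have key₂ : (μ-(a₂:ℂ))*(μ-(p₂:ℂ))-(b₂:ℂ)*((1/C:ℝ):ℂ) = μ^2+μ+1 := by
    have c1 : (a₂:ℂ) + (p₂:ℂ) = -1 := by exact_mod_cast congrArg Complex.ofReal s1
    have c2 : (b₂:ℂ) * ((1/C:ℝ):ℂ) = (a₂:ℂ)*(p₂:ℂ) - 1 := by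
      exact_mod_cast congrArg Complex.ofReal s2
    linear_combination (-μ) * c1 - c2
  rw [key₁, key₂] at hdet
  rcases mul_eq_zero.mp hdet with h | h
  · rcases mul_eq_zero.mp h with h | h
    · refine quad_root_re_neg (b := 3*(1/R)) (c := (1/R)^2)
        (by positivity) (by positivity) ?_
      push_cast at h ⊢
      linear_combination h
    · refine quad_root_re_neg (b := 1) (c := 1) one_pos one_pos ?_
      push_cast at h ⊢
      linear_combination h
  · refine quad_root_re_neg (b := 1) (c := 1) one_pos one_pos ?_
    push_cast
    linear_combination h
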